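/- Let r ∈ [0,1) and let n̂, m̂ ∈ ℝ³ be unit vectors. Define the 2×2 density matrices ρ = (1/2)(I + r·(n̂·σ⃗)) and σ = (1/2)(I + r·(m̂·σ⃗)), where σ⃗ = (σ_x, σ_y, σ_z) are the Pauli matrices. Then D(ρ‖σ) = D(σ‖ρ); explicitly, both equal r·sin²(θ/2)·log((1+r)/(1−r)), where θ is the angle between n̂ and m̂ (cos θ = n̂·m̂). -/

import Mathlib

/-- Functional-calculus (spectral) logarithm of a Hermitian matrix:
the eigenvalues are replaced by their (natural) logarithms in a spectral
decomposition; junk value `0` on non-Hermitian input. -/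
noncomputable def matLog {m : Type*} [Fintype m] [DecidableEq m]
    (A : Matrix m m ℂ) : Matrix m m ℂ :=
  if hA : A.IsHermitian then
    (hA.eigenvectorUnitary : Matrix m m ℂ) *
      Matrix.diagonal (fun i => (Real.log (hA.eigenvalues i) : ℂ)) *
      star (hA.eigenvectorUnitary : Matrix m m ℂ)
  else 0

/-- Quantum relative entropy `D(A‖B) = Re tr(A (log A − log B))`. -/
noncomputable def qRelEnt {m : Type*} [Fintype m] [DecidableEq m]
    (A B : Matrix m m ℂ) : ℝ :=
  ((A * (matLog A - matLog B)).trace).re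

/-- The Pauli matrix `σ_x`. -/
def pauliX : Matrix (Fin 2) (Fin 2) ℂ := !![0, 1; 1, 0]

/-- The Pauli matrix `σ_y`. -/
def pauliY : Matrix (Fin 2) (Fin 2) ℂ := !![0, -Complex.I; Complex.I, 0]

/-- The Pauli matrix `σ_z`. -/
def pauliZ : Matrix (Fin 2) (Fin 2) ℂ := !![1, 0; 0, -1]

/-- Bloch-vector contraction `v̂·σ⃗`. -/
noncomputable def blochOp (v : Fin 3 → ℝ) : Matrix (Fin 2) (Fin 2) ℂ :=
  v 0 • pauliX + v 1 • pauliY + v 2 • pauliZ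

/-- If the (natural) logarithm is affine on the spectrum of a Hermitian matrix `A`,
then `matLog A` is the corresponding affine expression in `A`. -/
lemma matLog_affine {k : Type*} [Fintype k] [DecidableEq k] {A : Matrix k k ℂ}
    (hA : A.IsHermitian) (α β : ℝ)
    (h : ∀ i, Real.log (hA.eigenvalues i) = α + β * hA.eigenvalues i) :
    matLog A = (α : ℂ) • 1 + (β : ℂ) • A := by
  have hu : (hA.eigenvectorUnitary : Matrix k k ℂ) * star (hA.eigenvectorUnitary : Matrix k k ℂ) = 1 :=
    (Matrix.mem_unitaryGroup_iff).mp hA.eigenvectorUnitary.2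
  rw [matLog, dif_pos hA]
  have hd : (Matrix.diagonal (fun i => (Real.log (hA.eigenvalues i) : ℂ)))
      = (α : ℂ) • 1 + (β : ℂ) • Matrix.diagonal (RCLike.ofReal ∘ hA.eigenvalues) := by
    ext i j
    by_cases hij : i = j
    · subst hij
      simp only [Matrix.diagonal_apply_eq, Matrix.add_apply, Matrix.smul_apply,
        Matrix.one_apply_eq, Function.comp_apply, smul_eq_mul, mul_one]
      rw [h i]
      push_cast [Complex.real_smul]
      rfl
    · simp [Matrix.diagonal_apply_ne _ hij, Matrix.one_apply_ne hij]
  rw [hd]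
  rw [mul_add, add_mul, Matrix.mul_smul, Matrix.smul_mul, mul_one, hu, Matrix.mul_smul,
    Matrix.smul_mul]
  conv_rhs => rw [hA.spectral_theorem, Unitary.conjStarAlgAut_apply]

/-- If a Hermitian matrix satisfies the quadratic `(A - a)(A - b) = 0`, then every
eigenvalue is `a` or `b`. -/
lemma eig_mem {k : Type*} [Fintype k] [DecidableEq k] {A : Matrix k k ℂ}
    (hA : A.IsHermitian) (a b : ℝ)
    (hq : (A - (a : ℂ) • 1) * (A - (b : ℂ) • 1) = 0) (i : k) :
    hA.eigenvalues i = a ∨ hA.eigenvalues i = b := by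
  set U := (hA.eigenvectorUnitary : Matrix k k ℂ) with hU
  have hu1 : star U * U = 1 := Matrix.UnitaryGroup.star_mul_self _
  have hu2 : U * star U = 1 := Matrix.mem_unitaryGroup_iff.mp hA.eigenvectorUnitary.2
  have hD : star U * A * U = Matrix.diagonal (RCLike.ofReal ∘ hA.eigenvalues) :=
    by rw [← hA.conjStarAlgAut_star_eigenvectorUnitary, Unitary.conjStarAlgAut_star_apply]
  have e1 : Matrix.diagonal (fun j => (hA.eigenvalues j : ℂ) - a) = star U * (A - (a:ℂ)•1) * U := by
    rw [Matrix.mul_sub, Matrix.sub_mul, hD, Matrix.mul_smul, mul_one, Matrix.smul_mul, hu1]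
    ext p q
    by_cases hpq : p = q <;> simp [Matrix.diagonal_apply, hpq, Matrix.one_apply]
  have e2 : Matrix.diagonal (fun j => (hA.eigenvalues j : ℂ) - b) = star U * (A - (b:ℂ)•1) * U := by
    rw [Matrix.mul_sub, Matrix.sub_mul, hD, Matrix.mul_smul, mul_one, Matrix.smul_mul, hu1]
    ext p q
    by_cases hpq : p = q <;> simp [Matrix.diagonal_apply, hpq, Matrix.one_apply]
  have key : Matrix.diagonal (fun j => (hA.eigenvalues j : ℂ) - a) *
      Matrix.diagonal (fun j => (hA.eigenvalues j : ℂ) - b) = 0 := by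
    rw [e1, e2]
    calc (star U * (A - (a:ℂ)•1) * U) * (star U * (A - (b:ℂ)•1) * U)
        = star U * ((A - (a:ℂ)•1) * ((U * star U) * ((A - (b:ℂ)•1) * U))) := by
          simp only [Matrix.mul_assoc]
      _ = 0 := by
          rw [hu2, one_mul, ← Matrix.mul_assoc (A - (a:ℂ)•1), hq]
          simp
  rw [Matrix.diagonal_mul_diagonal] at key
  have h0 : ((hA.eigenvalues i : ℂ) - a) * ((hA.eigenvalues i : ℂ) - b) = 0 := by
    have := congrArg (fun M => M i i) key
    simpa [Matrix.diagonal_apply_eq] using this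
  rcases mul_eq_zero.mp h0 with h | h
  · left; exact_mod_cast sub_eq_zero.mp h
  · right; exact_mod_cast sub_eq_zero.mp h

/-- A qubit state `½(1 + r v̂·σ⃗)` is Hermitian. -/
lemma qubit_herm (r : ℝ) (v : Fin 3 → ℝ) :
    (((2⁻¹ : ℝ) • (1 + r • blochOp v)) : Matrix (Fin 2) (Fin 2) ℂ).IsHermitian := by
  ext i j
  fin_cases i <;> fin_cases j <;>
    simp [blochOp, pauliX, pauliY, pauliZ, Matrix.conjTranspose_apply, Matrix.one_apply,
      Complex.ext_iff]

/-- The quadratic equation satisfied by a qubit state with unit Bloch direction. -/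
lemma qubit_quad (r : ℝ) (v : Fin 3 → ℝ) (hv : v 0 ^ 2 + v 1 ^ 2 + v 2 ^ 2 = 1) :
    (((2⁻¹ : ℝ) • (1 + r • blochOp v) : Matrix (Fin 2) (Fin 2) ℂ) - (((1+r)/2 : ℝ) : ℂ) • 1) *
      ((2⁻¹ : ℝ) • (1 + r • blochOp v) - (((1-r)/2 : ℝ) : ℂ) • 1) = 0 := by
  ext i j
  fin_cases i <;> fin_cases j <;>
  · simp [blochOp, pauliX, pauliY, pauliZ, Matrix.mul_apply, Fin.sum_univ_succ,
      Matrix.one_apply, Complex.ext_iff, Complex.add_re, Complex.add_im, Complex.mul_re,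
      Complex.mul_im, Complex.sub_re, Complex.sub_im]
    constructor <;> first
      | linear_combination (r^2/4) * hv
      | linear_combination (-(r^2)/4) * hv
      | ring

/-- Explicit trace computation for qubit states. -/
lemma trace_calc (r β : ℝ) (v w : Fin 3 → ℝ) :
    ((((2⁻¹ : ℝ) • (1 + r • blochOp v) : Matrix (Fin 2) (Fin 2) ℂ) *
      ((β : ℂ) • ((2⁻¹ : ℝ) • (1 + r • blochOp v) - (2⁻¹ : ℝ) • (1 + r • blochOp w)))).trace).re
    = β * (r^2/2) * ((v 0^2 + v 1^2 + v 2^2) - (v 0 * w 0 + v 1 * w 1 + v 2 * w 2)) := by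
  simp [blochOp, pauliX, pauliY, pauliZ, Matrix.trace_fin_two, Matrix.mul_apply,
    Fin.sum_univ_succ, Matrix.one_apply, Complex.add_re, Complex.add_im, Complex.mul_re,
    Complex.mul_im, Complex.sub_re, Complex.sub_im]
  ring

/-- **Symmetry of the relative entropy for equal-purity qubit states.**
For `ρ = ½(I + r n̂·σ⃗)` and `σ = ½(I + r m̂·σ⃗)` with `r ∈ [0,1)` and unit
vectors `n̂, m̂`, one has `D(ρ‖σ) = D(σ‖ρ)`, and both equal
`r sin²(θ/2) log((1+r)/(1−r))` where `cos θ = n̂·m̂`. -/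
theorem equal_purity_qubit_relEnt_symm
    (r : ℝ) (hr : r ∈ Set.Ico (0 : ℝ) 1)
    (n m : Fin 3 → ℝ)
    (hn : n 0 ^ 2 + n 1 ^ 2 + n 2 ^ 2 = 1)
    (hm : m 0 ^ 2 + m 1 ^ 2 + m 2 ^ 2 = 1)
    (θ : ℝ) (hθ : Real.cos θ = n 0 * m 0 + n 1 * m 1 + n 2 * m 2)
    (ρ σ : Matrix (Fin 2) (Fin 2) ℂ)
    (hρ : ρ = (2⁻¹ : ℝ) • (1 + r • blochOp n))
    (hσ : σ = (2⁻¹ : ℝ) • (1 + r • blochOp m)) :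
    qRelEnt ρ σ = qRelEnt σ ρ ∧
    qRelEnt ρ σ = r * Real.sin (θ / 2) ^ 2 * Real.log ((1 + r) / (1 - r)) := by
  obtain ⟨hr0, hr1⟩ := hr
  have h1p : (0:ℝ) < 1 + r := by linarith
  have h1m : (0:ℝ) < 1 - r := by linarith
  set β : ℝ := Real.log ((1 + r) / (1 - r)) / r with hβ
  set α : ℝ := Real.log ((1 + r) / 2) - β * ((1 + r) / 2) with hα
  have hβr : β * r = Real.log ((1 + r) / (1 - r)) := by
    by_cases h : r = 0
    · simp [hβ, h]
    · rw [hβ, div_mul_cancel₀ _ h]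
  have hlog : ∀ x : ℝ, x = (1+r)/2 ∨ x = (1-r)/2 → Real.log x = α + β * x := by
    rintro x (rfl | rfl)
    · rw [hα]; ring
    · rw [hα]
      have hd : Real.log ((1-r)/2) = Real.log ((1+r)/2) - Real.log ((1+r)/(1-r)) := by
        rw [Real.log_div (ne_of_gt h1m) (by norm_num),
          Real.log_div (ne_of_gt h1p) (by norm_num),
          Real.log_div (ne_of_gt h1p) (ne_of_gt h1m)]
        ring
      rw [hd, ← hβr]; ring
  have hρH : ρ.IsHermitian := by rw [hρ]; exact qubit_herm r n
  have hσH : σ.IsHermitian := by rw [hσ]; exact qubit_herm r m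
  have hρlog : matLog ρ = (α:ℂ) • 1 + (β:ℂ) • ρ := by
    apply matLog_affine hρH
    intro i
    exact hlog _ (eig_mem hρH _ _ (by rw [hρ]; exact qubit_quad r n hn) i)
  have hσlog : matLog σ = (α:ℂ) • 1 + (β:ℂ) • σ := by
    apply matLog_affine hσH
    intro i
    exact hlog _ (eig_mem hσH _ _ (by rw [hσ]; exact qubit_quad r m hm) i)
  have hdiff : matLog ρ - matLog σ = (β:ℂ) • (ρ - σ) := by
    rw [hρlog, hσlog, smul_sub]; abel
  have hdiff' : matLog σ - matLog ρ = (β:ℂ) • (σ - ρ) := by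
    rw [hρlog, hσlog, smul_sub]; abel
  have Dρσ : qRelEnt ρ σ = β * (r^2/2) * (1 - Real.cos θ) := by
    rw [qRelEnt, hdiff, hρ, hσ, trace_calc r β n m, hn, hθ]
  have Dσρ : qRelEnt σ ρ = β * (r^2/2) * (1 - Real.cos θ) := by
    rw [qRelEnt, hdiff', hρ, hσ, trace_calc r β m n, hm, hθ]
    ring
  refine ⟨by rw [Dρσ, Dσρ], ?_⟩
  rw [Dρσ]
  have hs : Real.sin (θ/2)^2 = (1 - Real.cos θ)/2 := by
    have h2 := Real.sin_sq_eq_half_sub (θ/2)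
    rw [show 2*(θ/2) = θ by ring] at h2
    linarith
  rw [hs]
  linear_combination (r * (1 - Real.cos θ)/2) * hβr
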